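/- For an equal-neighbor matrix P of an undirected graph (P_{ij} = W_{ij}/dᵢ with W symmetric binary, dᵢ ≥ 1), every column satisfies the bound: for all k ≥ 1, δ > 0, and every column j, (1/n)Σᵢ (Pᵏ)_{ij} ≤ δ·(1/n)Σᵢ P_{ij} + 1/δ. In particular, choosing δ = ((1/n)Σᵢ P_{ij})^{−1/2}, (1/n)Σᵢ(Pᵏ)_{ij} ≤ 2((1/n)Σᵢ P_{ij})^{1/2}. -/

import Mathlib

/-- Per-column bounds for powers of an equal-neighbor matrix:
`(1/n)∑ᵢ(Pᵏ)ᵢⱼ ≤ δ·(1/n)∑ᵢPᵢⱼ + 1/δ` for all `δ > 0`, and hence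
`(1/n)∑ᵢ(Pᵏ)ᵢⱼ ≤ 2((1/n)∑ᵢPᵢⱼ)^{1/2}`. -/
theorem equal_neighbor_column_bounds (n : ℕ) (hn : 0 < n)
    (W : Matrix (Fin n) (Fin n) ℝ)
    (hW_binary : ∀ i j, W i j = 0 ∨ W i j = 1)
    (hW_symm : ∀ i j, W i j = W j i)
    (d : Fin n → ℝ) (hd : ∀ i, d i = ∑ j, W i j) (hd_pos : ∀ i, 1 ≤ d i)
    (P : Matrix (Fin n) (Fin n) ℝ) (hP : ∀ i j, P i j = W i j / d i) :
    ∀ k : ℕ, 1 ≤ k → ∀ j : Fin n,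
      (∀ δ : ℝ, 0 < δ →
        (1 / (n : ℝ)) * ∑ i, (P ^ k) i j ≤
          δ * ((1 / (n : ℝ)) * ∑ i, P i j) + 1 / δ) ∧
      (1 / (n : ℝ)) * ∑ i, (P ^ k) i j ≤
        2 * Real.sqrt ((1 / (n : ℝ)) * ∑ i, P i j) := by
  have hdp : ∀ i, (0:ℝ) < d i := fun i => lt_of_lt_of_le one_pos (hd_pos i)
  have hWn : ∀ i j, 0 ≤ W i j := fun i j => by
    rcases hW_binary i j with h | h <;> simp [h]
  have hPn : ∀ i j, 0 ≤ P i j := fun i j => by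
    rw [hP]; exact div_nonneg (hWn i j) (hdp i).le
  have hrow : ∀ i, ∑ j, P i j = 1 := fun i => by
    simp only [hP]
    rw [← Finset.sum_div, ← hd i, div_self (hdp i).ne']
  have hpow_nonneg : ∀ m i j, 0 ≤ (P ^ m) i j := by
    intro m
    induction m with
    | zero =>
      intro i j
      simp only [pow_zero, Matrix.one_apply]
      split <;> norm_num
    | succ m ih =>
      intro i j
      rw [pow_succ, Matrix.mul_apply]
      exact Finset.sum_nonneg fun g _ => mul_nonneg (ih i g) (hPn g j)
  have hpow_row : ∀ m i, ∑ j, (P ^ m) i j = 1 := by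
    intro m
    induction m with
    | zero => intro i; simp [Matrix.one_apply]
    | succ m ih =>
      intro i
      simp only [pow_succ, Matrix.mul_apply]
      rw [Finset.sum_comm]
      calc ∑ g, ∑ j, (P ^ m) i g * P g j
          = ∑ g, (P ^ m) i g * ∑ j, P g j := by
            simp [Finset.mul_sum]
        _ = 1 := by simp [hrow, ih i]
  have hcolW : ∀ j, ∑ i, W i j = d j := fun j => by
    rw [hd j]; exact Finset.sum_congr rfl fun i _ => (hW_symm j i).symm
  have hcol : ∀ m j, ∑ i, (P ^ m) i j ≤ d j := by
    intro m
    induction m with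
    | zero =>
      intro j
      simp only [pow_zero, Matrix.one_apply]
      rw [Finset.sum_ite_eq' Finset.univ j fun _ => (1:ℝ)]
      simpa using hd_pos j
    | succ m ih =>
      intro j
      calc ∑ i, (P ^ (m+1)) i j = ∑ i, ∑ g, (P ^ m) i g * P g j := by
            simp [pow_succ, Matrix.mul_apply]
        _ = ∑ g, (∑ i, (P ^ m) i g) * P g j := by
            rw [Finset.sum_comm]; simp [Finset.sum_mul]
        _ ≤ ∑ g, d g * P g j :=
            Finset.sum_le_sum fun g _ =>
              mul_le_mul_of_nonneg_right (ih g) (hPn g j)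
        _ = ∑ g, W g j := by
            refine Finset.sum_congr rfl fun g _ => ?_
            rw [hP]
            field_simp
            rw [mul_comm, mul_div_assoc, div_self (hdp g).ne', mul_one]
        _ = d j := hcolW j
  intro k hk j
  -- key inequality without the 1/n normalization
  have key : ∀ δ : ℝ, 0 < δ →
      ∑ i, (P ^ k) i j ≤ δ * (∑ i, P i j) + n / δ := by
    intro δ hδ
    obtain ⟨m, rfl⟩ : ∃ m, k = m + 1 := ⟨k - 1, (Nat.succ_pred_eq_of_pos hk).symm⟩
    have expand : ∑ i, (P ^ (m+1)) i j
        = ∑ h, (∑ i, (P ^ m) i h) * P h j := by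
      simp only [pow_succ, Matrix.mul_apply]
      rw [Finset.sum_comm]; simp [Finset.sum_mul]
    rw [expand]
    have perterm : ∀ h : Fin n,
        (∑ i, (P ^ m) i h) * P h j ≤ δ * P h j + (1/δ) * ∑ i, (P ^ m) i h := by
      intro h
      by_cases hc : 1/δ ≤ P h j
      · -- then W h j = 1 and d h ≤ δ
        have hPpos : 0 < P h j := lt_of_lt_of_le (by positivity) hc
        have hW1 : W h j = 1 := by
          rcases hW_binary h j with h0 | h1
          · exfalso; rw [hP, h0] at hPpos; simp at hPpos
          · exact h1
        have hPval : P h j = 1 / d h := by rw [hP, hW1]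
        have hdle : d h ≤ δ := by
          rw [hPval, div_le_div_iff₀ hδ (hdp h)] at hc
          linarith
        have h1 : (∑ i, (P ^ m) i h) * P h j ≤ δ * P h j :=
          mul_le_mul_of_nonneg_right (le_trans (hcol m h) hdle) (hPn h j)
        have hs0 : 0 ≤ ∑ i, (P ^ m) i h :=
          Finset.sum_nonneg fun i _ => hpow_nonneg m i h
        have h2 : 0 ≤ (1/δ) * ∑ i, (P ^ m) i h := by positivity
        linarith
      · push_neg at hc
        have h1 : (∑ i, (P ^ m) i h) * P h j ≤ (∑ i, (P ^ m) i h) * (1/δ) :=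
          mul_le_mul_of_nonneg_left hc.le
            (Finset.sum_nonneg fun i _ => hpow_nonneg m i h)
        have h2 : 0 ≤ δ * P h j := mul_nonneg hδ.le (hPn h j)
        linarith [h1, h2, mul_comm (∑ i, (P ^ m) i h) (1/δ)]
    calc ∑ h, (∑ i, (P ^ m) i h) * P h j
        ≤ ∑ h, (δ * P h j + (1/δ) * ∑ i, (P ^ m) i h) :=
          Finset.sum_le_sum fun h _ => perterm h
      _ = δ * (∑ h, P h j) + (1/δ) * ∑ h, ∑ i, (P ^ m) i h := by
          rw [Finset.sum_add_distrib, ← Finset.mul_sum, ← Finset.mul_sum]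
      _ = δ * (∑ h, P h j) + (1/δ) * n := by
          rw [Finset.sum_comm]
          simp [hpow_row m]
      _ = δ * (∑ h, P h j) + n / δ := by ring
  have hnpos : (0:ℝ) < n := by exact_mod_cast hn
  have part1 : ∀ δ : ℝ, 0 < δ →
      (1 / (n : ℝ)) * ∑ i, (P ^ k) i j ≤
        δ * ((1 / (n : ℝ)) * ∑ i, P i j) + 1 / δ := by
    intro δ hδ
    have hle : (1 / (n : ℝ)) * ∑ i, (P ^ k) i j ≤
        (1 / (n : ℝ)) * (δ * (∑ i, P i j) + n / δ) :=
      mul_le_mul_of_nonneg_left (key δ hδ) (by positivity)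
    refine hle.trans_eq ?_
    field_simp
  refine ⟨part1, ?_⟩
  -- positivity of the column sum
  have hspos : 0 < ∑ i, P i j := by
    have : 0 < d j := hdp j
    rw [← hcolW j] at this
    obtain ⟨h0, _, hW0⟩ : ∃ i ∈ Finset.univ, 0 < W i j := by
      by_contra hcon
      push_neg at hcon
      have : ∑ i, W i j ≤ 0 :=
        Finset.sum_nonpos fun i hi => hcon i hi
      linarith
    have hW1 : W h0 j = 1 := by
      rcases hW_binary h0 j with h | h
      · rw [h] at hW0; exact absurd hW0 (lt_irrefl 0)
      · exact h
    have hPpos : 0 < P h0 j := by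
      rw [hP, hW1]; exact one_div_pos.mpr (hdp h0)
    exact lt_of_lt_of_le hPpos
      (Finset.single_le_sum (fun i _ => hPn i j) (Finset.mem_univ h0))
  set a : ℝ := (1 / (n : ℝ)) * ∑ i, P i j with ha
  have hapos : 0 < a := mul_pos (by positivity) hspos
  have hsq : 0 < Real.sqrt a := Real.sqrt_pos.mpr hapos
  have := part1 (1 / Real.sqrt a) (one_div_pos.mpr hsq)
  calc (1 / (n : ℝ)) * ∑ i, (P ^ k) i j
      ≤ (1 / Real.sqrt a) * a + 1 / (1 / Real.sqrt a) := this
    _ = 2 * Real.sqrt a := by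
        rw [one_div_one_div]
        have : a = Real.sqrt a * Real.sqrt a := (Real.mul_self_sqrt hapos.le).symm
        rw [this]
        field_simp
        rw [Real.sqrt_sq hsq.le]
        ring
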